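/- arXiv:1704.04575 — 3 statements merged into one kernel-verified Lean document; each statement's English description precedes it below -/
import Mathlib

section
/- Let κ be a regular uncountable cardinal, let T be a tree of height κ, and let P be a κ-Knaster partial order. Suppose that for every α < κ there are p_α ∈ P and t_α ∈ T_α such that for all α, β < κ, if p_α and p_β are compatible in P then t_α and t_β are comparable in T. Then T has a cofinal branch. (This is the combinatorial core of the paper's Lemma 2.2, due to Kunen and Tall: a κ-Knaster forcing notion adds no cofinal branch to a κ-Aronszajn tree.) -/
universe u

/-- A tree order: the set of strict predecessors of every element is
well-ordered by `<`. -/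
def IsTreeOrder (T : Type u) [PartialOrder T] : Prop :=
  ∀ t : T, IsWellOrder {s : T // s < t} (· < ·)

/-- The height of an element of a tree: the order type of its set of strict
predecessors. -/
noncomputable def treeHeight {T : Type u} [PartialOrder T] (hT : IsTreeOrder T) (t : T) :
    Ordinal.{u} :=
  @Ordinal.type {s : T // s < t} (· < ·) (hT t)

/-- The `α`-th level of a tree: the set of elements of height `α`. -/
noncomputable def treeLevel {T : Type u} [PartialOrder T] (hT : IsTreeOrder T)
    (α : Ordinal.{u}) : Set T :=
  {t | treeHeight hT t = α}

/-- The tree has height `κ`: `κ` is the least ordinal whose level is empty. -/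
noncomputable def treeHasHeight {T : Type u} [PartialOrder T] (hT : IsTreeOrder T)
    (κ : Ordinal.{u}) : Prop :=
  treeLevel hT κ = ∅ ∧ ∀ α < κ, (treeLevel hT α).Nonempty

/-- A cofinal branch of a tree of height `κ`: a chain meeting every level
`α < κ`. -/
noncomputable def IsCofinalBranch {T : Type u} [PartialOrder T] (hT : IsTreeOrder T)
    (κ : Ordinal.{u}) (b : Set T) : Prop :=
  IsChain (· ≤ ·) b ∧ ∀ α < κ, ∃ x ∈ b, x ∈ treeLevel hT α

/-- Two elements of a partial order are compatible if they have a common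
lower bound. -/
def Compat {P : Type u} [PartialOrder P] (p q : P) : Prop :=
  ∃ r, r ≤ p ∧ r ≤ q

/-- `P` is `κ`-Knaster: every `κ`-indexed family of elements of `P` has a
subfamily of full cardinality `κ` whose members are pairwise compatible. -/
def IsKnaster (κ : Cardinal.{u}) (P : Type u) [PartialOrder P] : Prop :=
  ∀ p : κ.ord.ToType → P, ∃ I : Set κ.ord.ToType,
    Cardinal.mk I = κ ∧ ∀ a ∈ I, ∀ b ∈ I, Compat (p a) (p b)

theorem treeHeight_lt_aux {T : Type u} [PartialOrder T] (hT : IsTreeOrder T)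
    {s u : T} (h : s < u) :
    treeHeight hT s = @Ordinal.typein {r : T // r < u} (· < ·) (hT u) ⟨s, h⟩ := by
  haveI := hT s; haveI := hT u
  rw [← @Ordinal.type_subrel {r : T // r < u} (· < ·) (hT u) ⟨s, h⟩]
  refine Ordinal.type_eq.2 ⟨?_⟩
  · exact
    { toFun := fun r => ⟨⟨r.1, r.2.trans h⟩, r.2⟩
      invFun := fun y => ⟨y.1.1, y.2⟩
      left_inv := fun r => rfl
      right_inv := fun y => rfl
      map_rel_iff' := Iff.rfl }

/-- Kunen–Tall (combinatorial core of Lemma 2.2): if `κ` is regular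
uncountable, `T` is a tree of height `κ`, `P` is `κ`-Knaster, and for every
`α < κ` there are `p α ∈ P` and `t α ∈ T_α` such that compatibility of
`p α, p β` implies comparability of `t α, t β`, then `T` has a cofinal
branch. -/
theorem knaster_adds_no_branch {T P : Type u} [PartialOrder T] [PartialOrder P]
    (κ : Cardinal.{u}) (hreg : κ.IsRegular) (hunc : Cardinal.aleph0 < κ)
    (hT : IsTreeOrder T) (hheight : treeHasHeight hT κ.ord)
    (hknaster : IsKnaster κ P)
    (p : Ordinal.{u} → P) (t : Ordinal.{u} → T)
    (ht : ∀ α < κ.ord, t α ∈ treeLevel hT α)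
    (hcompat : ∀ α < κ.ord, ∀ β < κ.ord,
      Compat (p α) (p β) → (t α ≤ t β ∨ t β ≤ t α)) :
    ∃ b : Set T, IsCofinalBranch hT κ.ord b := by
  classical
  haveI : IsWellOrder κ.ord.ToType (· < ·) := ⟨⟩
  obtain ⟨I, hI, hcomp⟩ := hknaster (fun a => p (Ordinal.typein (· < ·) a))
  set S : Set Ordinal.{u} := (fun a : κ.ord.ToType => Ordinal.typein (· < ·) a) '' I with hS
  have hSlt : ∀ β ∈ S, β < κ.ord := by
    rintro β ⟨a, _, rfl⟩
    exact Ordinal.typein_lt_self a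
  have hScompat : ∀ β ∈ S, ∀ γ ∈ S, Compat (p β) (p γ) := by
    rintro β ⟨a, ha, rfl⟩ γ ⟨b, hb, rfl⟩
    exact hcomp a ha b hb
  -- S is unbounded in κ.ord
  have hub : ∀ α < κ.ord, ∃ β ∈ S, α ≤ β := by
    intro α hα
    by_contra hcon
    push_neg at hcon
    have hα' : α < Ordinal.type ((· < ·) : κ.ord.ToType → κ.ord.ToType → Prop) := by
      rwa [Ordinal.type_toType]
    set x : κ.ord.ToType := Ordinal.enum (· < ·) ⟨α, hα'⟩ with hx
    have hIx : ∀ a ∈ I, a < x := by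
      intro a ha
      have h1 : Ordinal.typein (· < ·) a < α := hcon _ ⟨a, ha, rfl⟩
      have h2 : Ordinal.typein ((· < ·) : κ.ord.ToType → κ.ord.ToType → Prop) x = α :=
        Ordinal.typein_enum _ _
      rw [← h2] at h1
      exact (Ordinal.typein_lt_typein _).1 h1
    have hmk1 : Cardinal.mk I ≤ Cardinal.mk {y : κ.ord.ToType // y < x} := by
      refine ⟨⟨fun a => ⟨a.1, hIx a.1 a.2⟩, ?_⟩⟩
      intro a b hab
      simpa [Subtype.ext_iff] using hab
    have hmk2 : Cardinal.mk {y : κ.ord.ToType // y < x} = (Ordinal.typein (· < ·) x).card := by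
      rw [← Ordinal.type_subrel, Ordinal.card_type]
    have hlt : (Ordinal.typein ((· < ·) : κ.ord.ToType → κ.ord.ToType → Prop) x).card < κ := by
      rw [← Cardinal.lt_ord]
      exact Ordinal.typein_lt_self x
    rw [hI, hmk2] at hmk1
    exact absurd (hmk1.trans_lt hlt) (lt_irrefl κ)
  -- elements below a common element are comparable
  have key : ∀ (w x y : T), x ≤ w → y ≤ w → x ≤ y ∨ y ≤ x := by
    intro w x y hx hy
    rcases eq_or_lt_of_le hx with rfl | hx'
    · exact Or.inr hy
    rcases eq_or_lt_of_le hy with rfl | hy'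
    · exact Or.inl hx'.le
    haveI := hT w
    rcases @trichotomous {s : T // s < w} (· < ·) _ ⟨x, hx'⟩ ⟨y, hy'⟩ with h | h | h
    · exact Or.inl (le_of_lt (Subtype.mk_lt_mk.1 h))
    · exact Or.inl (le_of_eq (congrArg Subtype.val h))
    · exact Or.inr (le_of_lt (Subtype.mk_lt_mk.1 h))
  refine ⟨{z : T | ∃ β ∈ S, z ≤ t β}, ?_, ?_⟩
  · rintro x ⟨β, hβ, hxβ⟩ y ⟨γ, hγ, hyγ⟩ _
    rcases hcompat β (hSlt β hβ) γ (hSlt γ hγ) (hScompat β hβ γ hγ) with h | h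
    · exact key (t γ) x y (hxβ.trans h) hyγ
    · exact key (t β) x y hxβ (hyγ.trans h)
  · intro α hα
    obtain ⟨β, hβS, hαβ⟩ := hub α hα
    have hβκ := hSlt β hβS
    have htβ : treeHeight hT (t β) = β := ht β hβκ
    rcases eq_or_lt_of_le hαβ with heq | hlt
    · exact ⟨t β, ⟨β, hβS, le_rfl⟩, by rw [treeLevel, Set.mem_setOf_eq, htβ, heq]⟩
    · haveI := hT (t β)
      have hα' : α < @Ordinal.type {s : T // s < t β} (· < ·) (hT (t β)) := by
        rw [show @Ordinal.type {s : T // s < t β} (· < ·) (hT (t β)) = treeHeight hT (t β) from rfl,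
          htβ]
        exact hlt
      set e : {s : T // s < t β} := Ordinal.enum (· < ·) ⟨α, hα'⟩ with he
      have hlev : treeHeight hT e.1 = α := by
        rw [treeHeight_lt_aux hT e.2]
        have : (⟨e.1, e.2⟩ : {s : T // s < t β}) = e := rfl
        rw [this, he]
        exact Ordinal.typein_enum _ _
      exact ⟨e.1, ⟨β, hβS, e.2.le⟩, hlev⟩
end

section
/- (Kurepa's branch theorem, invoked in the proof of Lemma 2.1.) Let κ be a regular uncountable cardinal and let η be an infinite regular cardinal with η < κ. Then every tree of height κ all of whose levels have cardinality less than η has a cofinal branch. -/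
universe u

section KurepaAux

variable {T : Type u} [PartialOrder T]

lemma treeHeight_eq_typein (hT : IsTreeOrder T) {s t : T} (h : s < t) :
    treeHeight hT s = @Ordinal.typein {u : T // u < t} (· < ·) (hT t) ⟨s, h⟩ := by
  haveI := hT t
  haveI := hT s
  refine Eq.trans ?_ (Ordinal.type_subrel _ _)
  let e : {u : T // u < s} ≃ ↥{b : {u : T // u < t} | b < ⟨s, h⟩} :=
    ⟨fun x => ⟨⟨x.1, lt_trans x.2 h⟩,
        show (⟨x.1, lt_trans x.2 h⟩ : {u : T // u < t}) < ⟨s, h⟩ from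
          Subtype.mk_lt_mk.mpr x.2⟩,
     fun y => ⟨y.1.1, Subtype.coe_lt_coe.mpr y.2⟩, fun x => rfl, fun y => rfl⟩
  refine RelIso.ordinal_type_eq ⟨e, ?_⟩
  intro a b
  constructor
  · exact fun hab => Subtype.coe_lt_coe.mp hab
  · exact fun hab => Subtype.coe_lt_coe.mpr hab

lemma treeHeight_lt_of_lt (hT : IsTreeOrder T) {s t : T} (h : s < t) :
    treeHeight hT s < treeHeight hT t := by
  haveI := hT t
  rw [treeHeight_eq_typein hT h]
  exact Ordinal.typein_lt_type _ _

lemma treeHeight_le_of_le (hT : IsTreeOrder T) {s t : T} (h : s ≤ t) :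
    treeHeight hT s ≤ treeHeight hT t := by
  rcases h.lt_or_eq with h | h
  · exact (treeHeight_lt_of_lt hT h).le
  · rw [h]

lemma exists_pred (hT : IsTreeOrder T) (t : T) {α : Ordinal.{u}}
    (hα : α < treeHeight hT t) : ∃ s, s < t ∧ treeHeight hT s = α := by
  haveI := hT t
  obtain ⟨x, hx⟩ := Ordinal.typein_surj (α := {s : T // s < t}) (· < ·) hα
  exact ⟨x.1, x.2, by rw [treeHeight_eq_typein hT x.2]; exact hx⟩

lemma pred_unique (hT : IsTreeOrder T) {s s' t : T} (hs : s < t) (hs' : s' < t)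
    (h : treeHeight hT s = treeHeight hT s') : s = s' := by
  haveI := hT t
  rw [treeHeight_eq_typein hT hs, treeHeight_eq_typein hT hs'] at h
  have := Ordinal.typein_injective (α := {u : T // u < t}) (· < ·) h
  exact congrArg Subtype.val this

lemma pred_comp (hT : IsTreeOrder T) {s s' t : T} (hs : s < t) (hs' : s' < t) :
    s < s' ∨ s = s' ∨ s' < s := by
  haveI := hT t
  have := @trichotomous _ (· < ·) _ (⟨s, hs⟩ : {u : T // u < t}) ⟨s', hs'⟩
  rcases this with h | h | h
  · exact Or.inl (Subtype.mk_lt_mk.mp h)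
  · exact Or.inr (Or.inl (congrArg Subtype.val h))
  · exact Or.inr (Or.inr (Subtype.mk_lt_mk.mp h))

lemma comp_of_le_le (hT : IsTreeOrder T) {s s' t : T} (hs : s ≤ t) (hs' : s' ≤ t) :
    s ≤ s' ∨ s' ≤ s := by
  rcases hs.lt_or_eq with h | rfl
  · rcases hs'.lt_or_eq with h' | rfl
    · rcases pred_comp hT h h' with h1 | h1 | h1
      · exact Or.inl h1.le
      · exact Or.inl h1.le
      · exact Or.inr h1.le
    · exact Or.inl h.le
  · exact Or.inr hs'

lemma lt_of_both_lt (hT : IsTreeOrder T) {s p t : T} (hs : s < t) (hp : p < t)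
    (hh : treeHeight hT s < treeHeight hT p) : s < p := by
  rcases pred_comp hT hs hp with h | rfl | h
  · exact h
  · exact absurd hh (lt_irrefl _)
  · exact ((lt_asymm (treeHeight_lt_of_lt hT h)) hh).elim

lemma le_of_both_le (hT : IsTreeOrder T) {s p t : T} (hs : s ≤ t) (hp : p ≤ t)
    (hh : treeHeight hT s ≤ treeHeight hT p) : s ≤ p := by
  rcases comp_of_le_le hT hs hp with h | h
  · exact h
  · have := treeHeight_le_of_le hT h
    have heq : treeHeight hT p = treeHeight hT s := le_antisymm this hh
    rcases h.lt_or_eq with h' | h'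
    · exact absurd (treeHeight_lt_of_lt hT h') (by rw [heq]; exact lt_irrefl _)
    · exact h'.ge

lemma exists_le_height (hT : IsTreeOrder T) (t : T) {α : Ordinal.{u}}
    (hα : α ≤ treeHeight hT t) : ∃ s, s ≤ t ∧ treeHeight hT s = α := by
  rcases hα.lt_or_eq with h | h
  · obtain ⟨s, h1, h2⟩ := exists_pred hT t h
    exact ⟨s, h1.le, h2⟩
  · exact ⟨t, le_refl _, h.symm⟩

open scoped Classical in
/-- The projection of `t` to level `α` (junk value `t` if `α ≥` height of `t`). -/
noncomputable def treeProj (hT : IsTreeOrder T) (t : T) (α : Ordinal.{u}) : T :=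
  if h : ∃ s, s < t ∧ treeHeight hT s = α then h.choose else t

lemma treeProj_spec (hT : IsTreeOrder T) {t : T} {α : Ordinal.{u}}
    (hα : α < treeHeight hT t) :
    treeProj hT t α < t ∧ treeHeight hT (treeProj hT t α) = α := by
  have h := exists_pred hT t hα
  classical
  rw [treeProj, dif_pos h]
  exact h.choose_spec

lemma treeProj_eq (hT : IsTreeOrder T) {s t : T} {α : Ordinal.{u}} (hs : s < t)
    (hα : treeHeight hT s = α) : treeProj hT t α = s := by
  have hlt : α < treeHeight hT t := hα ▸ treeHeight_lt_of_lt hT hs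
  obtain ⟨h1, h2⟩ := treeProj_spec hT hlt
  exact pred_unique hT h1 hs (h2.trans hα.symm)

/-- Two nodes are twins if they have the same strict predecessors. -/
def Twins (t t' : T) : Prop := ∀ s : T, s < t ↔ s < t'

/-- A node is tall if there are nodes above it of unboundedly large height. -/
def Tall (hT : IsTreeOrder T) (o : Ordinal.{u}) (t : T) : Prop :=
  ∀ β < o, ∃ u : T, t ≤ u ∧ β ≤ treeHeight hT u

open Cardinal in
/-- Pigeonhole: any assignment of elements of a small type to the ordinals below
`c.ord` is constant on an unbounded set. -/
lemma pigeon {c : Cardinal.{u}} (hreg : c.IsRegular) {ι : Type u} (hι : #ι < c)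
    (f : ∀ β : Ordinal.{u}, β < c.ord → ι) :
    ∃ a : ι, ∀ β < c.ord, ∃ γ, β ≤ γ ∧ ∃ h : γ < c.ord, f γ h = a := by
  by_contra hcon
  push_neg at hcon
  choose g hg1 hg2 using hcon
  have hγ : iSup g < c.ord :=
    Ordinal.iSup_lt_ord (by rwa [hreg.cof_eq]) hg1
  exact hg2 (f _ hγ) _ (Ordinal.le_iSup g _) hγ rfl

/-- The iteration used to build a point of cofinality `η` closed under `B`. -/
noncomputable def kIter (B : Ordinal.{u} → Ordinal.{u}) : Ordinal.{u} → Ordinal.{u} :=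
  fun i =>
    Ordinal.blsub (Ordinal.blsub i (fun j _ => kIter B j) + 1) (fun α _ => max α (B α) + 1)
termination_by i => i
decreasing_by all_goals assumption

lemma kIter_gt (B : Ordinal.{u} → Ordinal.{u}) (i : Ordinal.{u}) :
    ∀ α ≤ Ordinal.blsub i (fun j _ => kIter B j), α < kIter B i ∧ B α < kIter B i := by
  intro α hα
  have h1 : α < Ordinal.blsub i (fun j _ => kIter B j) + 1 := by
    exact lt_of_le_of_lt hα (lt_add_one _)
  have h2 := Ordinal.lt_blsub (fun α _ => max α (B α) + 1) α h1
  rw [kIter]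
  constructor
  · exact lt_of_le_of_lt (le_trans (le_max_left α (B α)) (le_of_lt (lt_add_one _))) h2
  · exact lt_of_le_of_lt (le_trans (le_max_right α (B α)) (le_of_lt (lt_add_one _))) h2

lemma kIter_strictMono (B : Ordinal.{u} → Ordinal.{u}) : StrictMono (kIter B) := by
  intro j i h
  have hle : kIter B j ≤ Ordinal.blsub i (fun j _ => kIter B j) :=
    (Ordinal.lt_blsub (fun j _ => kIter B j) j h).le
  exact (kIter_gt B i _ hle).1

lemma kIter_B_lt (B : Ordinal.{u} → Ordinal.{u}) {j i : Ordinal.{u}} (h : j < i) :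
    B (kIter B j) < kIter B i := by
  have hle : kIter B j ≤ Ordinal.blsub i (fun j _ => kIter B j) :=
    (Ordinal.lt_blsub (fun j _ => kIter B j) j h).le
  exact (kIter_gt B i _ hle).2

lemma kIter_lt_ord {κ : Cardinal.{u}} (hκreg : κ.IsRegular)
    {B : Ordinal.{u} → Ordinal.{u}} (hB : ∀ α, B α < κ.ord) :
    ∀ i : Ordinal.{u}, i.card < κ → kIter B i < κ.ord := by
  have hlim : Order.IsSuccLimit (Cardinal.ord κ) := Cardinal.isSuccLimit_ord hκreg.aleph0_le
  intro i
  induction i using Ordinal.induction with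
  | h i IH =>
    intro hi
    have hx : Ordinal.blsub i (fun j _ => kIter B j) < κ.ord := by
      apply Ordinal.blsub_lt_ord (by rwa [hκreg.cof_eq])
      intro j hj
      exact IH j hj (lt_of_le_of_lt (Ordinal.card_le_card hj.le) hi)
    rw [kIter]
    apply Ordinal.blsub_lt_ord
    · rw [hκreg.cof_eq, ← Order.succ_eq_add_one, Ordinal.card_succ]
      exact Cardinal.add_lt_of_lt hκreg.aleph0_le ((Cardinal.lt_ord).mp hx)
        (lt_of_lt_of_le Cardinal.one_lt_aleph0 hκreg.aleph0_le)
    · intro α hα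
      have hα' : α ≤ Ordinal.blsub i (fun j _ => kIter B j) := by
        rwa [← Order.succ_eq_add_one, Order.lt_succ_iff] at hα
      have h1 : max α (B α) < κ.ord := max_lt (lt_of_le_of_lt hα' hx) (hB α)
      rw [← Order.succ_eq_add_one]
      exact hlim.succ_lt h1

end KurepaAux

/-- Kurepa's branch theorem (invoked in the proof of Lemma 2.1): if `κ` is
regular uncountable and `η < κ` is an infinite regular cardinal, then every
tree of height `κ` all of whose levels have cardinality `< η` has a cofinal
branch. -/
theorem kurepa_branch {T : Type u} [PartialOrder T]
    (κ η : Cardinal.{u}) (hκreg : κ.IsRegular) (hκunc : Cardinal.aleph0 < κ)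
    (hηreg : η.IsRegular) (hηinf : Cardinal.aleph0 ≤ η) (hηκ : η < κ)
    (hT : IsTreeOrder T) (hheight : treeHasHeight hT κ.ord)
    (hlevels : ∀ α : Ordinal.{u}, Cardinal.mk (treeLevel hT α) < η) :
    ∃ b : Set T, IsCofinalBranch hT κ.ord b := by
  classical
  obtain ⟨hemp, hnon⟩ := hheight
  have hκord : Order.IsSuccLimit (κ.ord) := Cardinal.isSuccLimit_ord hκreg.aleph0_le
  have hηord : Order.IsSuccLimit (η.ord) := Cardinal.isSuccLimit_ord hηinf
  -- every node has height < κ.ord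
  have hht : ∀ t : T, treeHeight hT t < κ.ord := by
    intro t
    by_contra hcon
    push_neg at hcon
    rcases hcon.lt_or_eq with h | h
    · obtain ⟨s, _, hs2⟩ := exists_pred hT t h
      have : s ∈ treeLevel hT κ.ord := hs2
      rw [hemp] at this
      exact this
    · have : t ∈ treeLevel hT κ.ord := h.symm
      rw [hemp] at this
      exact this
  -- there is a tall node at every level
  have tall_exists : ∀ α, α < κ.ord → ∃ s, Tall hT κ.ord s ∧ treeHeight hT s = α := by
    intro α hα
    have H : ∀ β (_ : β < κ.ord), ∃ p : ↥(treeLevel hT α), ∃ u : T,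
        p.1 ≤ u ∧ β ≤ treeHeight hT u := by
      intro β hβ
      obtain ⟨t, ht1⟩ := hnon (max α β) (max_lt hα hβ)
      have ht1' : treeHeight hT t = max α β := ht1
      obtain ⟨s, hs1, hs2⟩ := exists_le_height hT t (α := α) (by rw [ht1']; exact le_max_left _ _)
      exact ⟨⟨s, hs2⟩, t, hs1, by rw [ht1']; exact le_max_right _ _⟩
    choose f u hf1 hf2 using H
    obtain ⟨a, ha⟩ := pigeon hκreg (lt_trans (hlevels α) hηκ) f
    refine ⟨a.1, ?_, a.2⟩
    intro β hβ
    obtain ⟨γ, hβγ, hγ, heq⟩ := ha β hβ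
    refine ⟨u γ hγ, ?_, le_trans hβγ (hf2 γ hγ)⟩
    rw [← heq]
    exact hf1 γ hγ
  -- tall nodes extend to tall nodes at every higher level
  have tall_ext : ∀ t β, Tall hT κ.ord t → treeHeight hT t ≤ β → β < κ.ord →
      ∃ p, t ≤ p ∧ Tall hT κ.ord p ∧ treeHeight hT p = β := by
    intro t β htall hβ1 hβ2
    have hScard : Cardinal.mk ↥{p : T | treeHeight hT p = β ∧ t ≤ p} < κ := by
      refine lt_trans (lt_of_le_of_lt (Cardinal.mk_le_mk_of_subset ?_) (hlevels β)) hηκ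
      intro p hp
      exact hp.1
    have H : ∀ δ (_ : δ < κ.ord), ∃ p : ↥{p : T | treeHeight hT p = β ∧ t ≤ p}, ∃ u : T,
        p.1 ≤ u ∧ δ ≤ treeHeight hT u := by
      intro δ hδ
      obtain ⟨u, hu1, hu2⟩ := htall (max β δ) (max_lt hβ2 hδ)
      obtain ⟨s, hs1, hs2⟩ := exists_le_height hT u (le_trans (le_max_left _ _) hu2)
      have hts : t ≤ s := le_of_both_le hT hu1 hs1 (by rw [hs2]; exact hβ1)
      exact ⟨⟨s, ⟨hs2, hts⟩⟩, u, hs1, le_trans (le_max_right _ _) hu2⟩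
    choose f u hf1 hf2 using H
    obtain ⟨a, ha⟩ := pigeon hκreg hScard f
    refine ⟨a.1, a.2.2, ?_, a.2.1⟩
    intro δ hδ
    obtain ⟨γ, hδγ, hγ, heq⟩ := ha δ hδ
    exact ⟨u γ hγ, by rw [← heq]; exact hf1 γ hγ, le_trans hδγ (hf2 γ hγ)⟩
  -- Claim: there is a level α0 that separates non-twins at unboundedly many levels
  have claim1 : ∃ a, a < κ.ord ∧ ∀ β, β < κ.ord → ∃ lam, β ≤ lam ∧ lam < κ.ord ∧ a < lam ∧
      ∀ x y : T, treeHeight hT x = lam → treeHeight hT y = lam →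
        treeProj hT x a = treeProj hT y a → Twins x y := by
    by_contra hcon
    push_neg at hcon
    have hB : ∀ a : Ordinal.{u}, ∃ β, β < κ.ord ∧ ∀ lam, β ≤ lam → lam < κ.ord → a < lam →
        ∃ x y : T, treeHeight hT x = lam ∧ treeHeight hT y = lam ∧
          treeProj hT x a = treeProj hT y a ∧ ¬ Twins x y := by
      intro a
      by_cases h : a < κ.ord
      · exact hcon a h
      · exact ⟨0, hκord.pos, fun lam _ h2 h3 => absurd (h3.trans h2) h⟩
    choose B hB1 hB2 using hB
    have hg_lt : ∀ i, i < η.ord → kIter B i < κ.ord := by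
      intro i hi
      refine kIter_lt_ord hκreg hB1 i (lt_of_le_of_lt ?_ hηκ)
      rw [← Cardinal.card_ord η]
      exact Ordinal.card_le_card hi.le
    set lam := Ordinal.bsup η.ord (fun i _ => kIter B i) with hlamdef
    have hlamκ : lam < κ.ord := by
      refine Ordinal.bsup_lt_ord ?_ (fun i hi => hg_lt i hi)
      rw [hκreg.cof_eq, Cardinal.card_ord]
      exact hηκ
    have hg_lam : ∀ i, i < η.ord → kIter B i < lam := by
      intro i hi
      have h1 : kIter B i < kIter B (i + 1) :=
        kIter_strictMono B (by rw [← Order.succ_eq_add_one]; exact Order.lt_succ i)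
      have h2 : i + 1 < η.ord := by
        rw [← Order.succ_eq_add_one]; exact hηord.succ_lt hi
      exact lt_of_lt_of_le h1 (Ordinal.le_bsup _ (i + 1) h2)
    have hBg_lam : ∀ i, i < η.ord → B (kIter B i) ≤ lam := by
      intro i hi
      have h1 : B (kIter B i) < kIter B (i + 1) :=
        kIter_B_lt B (by rw [← Order.succ_eq_add_one]; exact Order.lt_succ i)
      have h2 : i + 1 < η.ord := by
        rw [← Order.succ_eq_add_one]; exact hηord.succ_lt hi
      exact le_trans h1.le (Ordinal.le_bsup _ (i + 1) h2)
    have hbad : ∀ i (_ : i < η.ord), ∃ p : ↥(treeLevel hT lam) × ↥(treeLevel hT lam),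
        treeProj hT p.1.1 (kIter B i) = treeProj hT p.2.1 (kIter B i) ∧
          ¬ Twins p.1.1 p.2.1 := by
      intro i hi
      obtain ⟨x, y, hx, hy, hproj, htw⟩ := hB2 (kIter B i) lam (hBg_lam i hi) hlamκ (hg_lam i hi)
      exact ⟨(⟨x, hx⟩, ⟨y, hy⟩), hproj, htw⟩
    choose F hF1 hF2 using hbad
    have hcard : Cardinal.mk (↥(treeLevel hT lam) × ↥(treeLevel hT lam)) < η := by
      have h1 : Cardinal.mk (↥(treeLevel hT lam) × ↥(treeLevel hT lam)) =
          Cardinal.mk ↥(treeLevel hT lam) * Cardinal.mk ↥(treeLevel hT lam) := by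
        simp
      rw [h1]
      exact Cardinal.mul_lt_of_lt hηinf (hlevels lam) (hlevels lam)
    obtain ⟨a, ha⟩ := pigeon hηreg hcard F
    have hx : treeHeight hT a.1.1 = lam := a.1.2
    have hy : treeHeight hT a.2.1 = lam := a.2.2
    obtain ⟨γ0, _, hγ0, heq0⟩ := ha 0 hηord.pos
    have hnt : ¬ Twins a.1.1 a.2.1 := by
      have h := hF2 γ0 hγ0
      rw [heq0] at h
      exact h
    apply hnt
    have key : ∀ x' y' : T, treeHeight hT x' = lam → treeHeight hT y' = lam →
        (∀ β, β < η.ord → ∃ γ, β ≤ γ ∧ ∃ _ : γ < η.ord,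
          treeProj hT x' (kIter B γ) = treeProj hT y' (kIter B γ)) →
        ∀ s, s < x' → s < y' := by
      intro x' y' hx' hy' hag s hs
      have hslam : treeHeight hT s < lam := by
        rw [← hx']
        exact treeHeight_lt_of_lt hT hs
      obtain ⟨i0, hi0, hsi0⟩ := (Ordinal.lt_bsup _).mp hslam
      obtain ⟨γ, hγ1, hγ2, hproj⟩ := hag i0 hi0
      have hsγ : treeHeight hT s < kIter B γ :=
        lt_of_lt_of_le hsi0 ((kIter_strictMono B).monotone hγ1)
      have hgγlam : kIter B γ < lam := hg_lam γ hγ2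
      have hp := treeProj_spec hT (t := x') (α := kIter B γ) (by rw [hx']; exact hgγlam)
      have hp' := treeProj_spec hT (t := y') (α := kIter B γ) (by rw [hy']; exact hgγlam)
      have hsp : s < treeProj hT x' (kIter B γ) :=
        lt_of_both_lt hT hs hp.1 (by rw [hp.2]; exact hsγ)
      rw [hproj] at hsp
      exact lt_trans hsp hp'.1
    have hag : ∀ β, β < η.ord → ∃ γ, β ≤ γ ∧ ∃ _ : γ < η.ord,
        treeProj hT a.1.1 (kIter B γ) = treeProj hT a.2.1 (kIter B γ) := by
      intro β hβ
      obtain ⟨γ, h1, h2, h3⟩ := ha β hβ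
      refine ⟨γ, h1, h2, ?_⟩
      have h := hF1 γ h2
      rw [h3] at h
      exact h
    have hag' : ∀ β, β < η.ord → ∃ γ, β ≤ γ ∧ ∃ _ : γ < η.ord,
        treeProj hT a.2.1 (kIter B γ) = treeProj hT a.1.1 (kIter B γ) := by
      intro β hβ
      obtain ⟨γ, h1, h2, h3⟩ := hag β hβ
      exact ⟨γ, h1, h2, h3.symm⟩
    intro s
    exact ⟨key a.1.1 a.2.1 hx hy hag s, key a.2.1 a.1.1 hy hx hag' s⟩
  -- assemble the branch
  obtain ⟨α0, hα0, hU⟩ := claim1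
  obtain ⟨s0, hs0tall, hs0h⟩ := tall_exists α0 hα0
  have hmain : ∀ β, β < κ.ord → ∃ t : T, s0 < t ∧ β ≤ treeHeight hT t ∧
      ∀ x y : T, treeHeight hT x = treeHeight hT t → treeHeight hT y = treeHeight hT t →
        treeProj hT x α0 = treeProj hT y α0 → Twins x y := by
    intro β hβ
    obtain ⟨lam, h1, h2, h3, h4⟩ := hU β hβ
    obtain ⟨t, ht1, _, ht3⟩ := tall_ext s0 lam hs0tall (by rw [hs0h]; exact h3.le) h2
    have hslt : s0 < t := by
      rcases ht1.lt_or_eq with h | h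
      · exact h
      · rw [← h, hs0h] at ht3
        exact absurd ht3 h3.ne
    refine ⟨t, hslt, by rw [ht3]; exact h1, ?_⟩
    rw [ht3]
    exact h4
  choose tf htf1 htf2 htf3 using hmain
  have hproj_s0 : ∀ β (hβ : β < κ.ord), treeProj hT (tf β hβ) α0 = s0 := fun β hβ =>
    treeProj_eq hT (htf1 β hβ) hs0h
  refine ⟨{s : T | ∃ β, ∃ hβ : β < κ.ord, s < tf β hβ}, ?_, ?_⟩
  · -- it is a chain
    have key2 : ∀ β hβ γ hγ (s s' : T), treeHeight hT (tf β hβ) ≤ treeHeight hT (tf γ hγ) →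
        s < tf β hβ → s' < tf γ hγ → s ≤ s' ∨ s' ≤ s := by
      intro β hβ γ hγ s s' hle hs hs'
      have hsg : s < tf γ hγ := by
        rcases hle.lt_or_eq with hlt | heq
        · have hp := treeProj_spec hT (t := tf γ hγ) (α := treeHeight hT (tf β hβ)) hlt
          have hs0p : s0 < treeProj hT (tf γ hγ) (treeHeight hT (tf β hβ)) := by
            refine lt_of_both_lt hT (htf1 γ hγ) hp.1 ?_
            rw [hp.2, hs0h]
            rw [← hs0h]
            exact treeHeight_lt_of_lt hT (htf1 β hβ)
          have hps0 : treeProj hT (treeProj hT (tf γ hγ) (treeHeight hT (tf β hβ))) α0 = s0 :=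
            treeProj_eq hT hs0p hs0h
          have htw : Twins (treeProj hT (tf γ hγ) (treeHeight hT (tf β hβ))) (tf β hβ) :=
            htf3 β hβ _ _ hp.2 rfl (by rw [hps0, hproj_s0 β hβ])
          have hsp : s < treeProj hT (tf γ hγ) (treeHeight hT (tf β hβ)) := (htw s).mpr hs
          exact lt_trans hsp hp.1
        · have htw : Twins (tf β hβ) (tf γ hγ) :=
            htf3 γ hγ _ _ heq rfl (by rw [hproj_s0, hproj_s0])
          exact (htw s).mp hs
      rcases pred_comp hT hsg hs' with h | h | h
      · exact Or.inl h.le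
      · exact Or.inl h.le
      · exact Or.inr h.le
    intro s hs s' hs' _
    obtain ⟨β, hβ, h1⟩ := hs
    obtain ⟨γ, hγ, h2⟩ := hs'
    rcases le_total (treeHeight hT (tf β hβ)) (treeHeight hT (tf γ hγ)) with h | h
    · exact key2 β hβ γ hγ s s' h h1 h2
    · exact (key2 γ hγ β hβ s' s h h2 h1).symm
  · -- it meets every level below κ.ord
    intro α hα
    have hα1 : α + 1 < κ.ord := by
      rw [← Order.succ_eq_add_one]
      exact hκord.succ_lt hα
    have hαlt : α < treeHeight hT (tf (α + 1) hα1) := by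
      refine lt_of_lt_of_le ?_ (htf2 (α + 1) hα1)
      rw [← Order.succ_eq_add_one]
      exact Order.lt_succ α
    have hp := treeProj_spec hT (t := tf (α + 1) hα1) (α := α) hαlt
    exact ⟨treeProj hT (tf (α + 1) hα1) α, ⟨α + 1, hα1, hp.1⟩, hp.2⟩
end

section
/- Let κ be a regular uncountable cardinal and let η be an infinite regular cardinal with η < κ. Let T be a tree of height κ and let T' ⊆ T be downward closed (i.e., if s < t and t ∈ T' then s ∈ T') and such that for every α < κ the set T' ∩ T_α is nonempty and has cardinality less than η. Then T has a cofinal branch. (This is the combinatorial core of the paper's Lemma 2.1: an η-c.c. forcing notion with η < κ adds no cofinal branch to a κ-Aronszajn tree, because the set of possible values of a name for a branch forms such a subtree T'.) -/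
universe u

namespace TreeAux

variable {T : Type u} [PartialOrder T]

theorem height_eq_typein (hT : IsTreeOrder T) {s t : T} (h : s < t) :
    treeHeight hT s = (@Ordinal.typein {x : T // x < t} (· < ·) (hT t)) ⟨s, h⟩ := by
  haveI := hT t
  haveI := hT s
  rw [← Ordinal.type_subrel]
  let e : {x : T // x < s} ≃ {b : {x : T // x < t} // b ∈ {b : {x : T // x < t} | b < ⟨s, h⟩}} :=
    { toFun := fun u => ⟨⟨u.1, lt_trans u.2 h⟩,
        show (⟨u.1, lt_trans u.2 h⟩ : {x : T // x < t}) < ⟨s, h⟩ from Subtype.mk_lt_mk.2 u.2⟩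
      invFun := fun v => ⟨v.1.1, Subtype.mk_lt_mk.1 v.2⟩
      left_inv := fun u => rfl
      right_inv := fun v => rfl }
  refine Ordinal.type_eq.2 ⟨⟨e, ?_⟩⟩
  intro a b
  constructor
  · intro hab
    have h2 : (⟨a.1, lt_trans a.2 h⟩ : {x : T // x < t}) < ⟨b.1, lt_trans b.2 h⟩ := hab
    exact Subtype.mk_lt_mk.2 (Subtype.mk_lt_mk.1 h2)
  · intro hab
    show (⟨a.1, lt_trans a.2 h⟩ : {x : T // x < t}) < ⟨b.1, lt_trans b.2 h⟩
    exact Subtype.mk_lt_mk.2 (Subtype.mk_lt_mk.1 hab)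

theorem height_lt (hT : IsTreeOrder T) {s t : T} (h : s < t) : treeHeight hT s < treeHeight hT t := by
  haveI := hT t
  rw [height_eq_typein hT h]
  exact Ordinal.typein_lt_type _ _

theorem height_le (hT : IsTreeOrder T) {s t : T} (h : s ≤ t) : treeHeight hT s ≤ treeHeight hT t := by
  rcases eq_or_lt_of_le h with rfl | h
  · exact le_rfl
  · exact (height_lt hT h).le

theorem exists_pred (hT : IsTreeOrder T) {t : T} {α : Ordinal.{u}} (h : α < treeHeight hT t) :
    ∃ s : T, s < t ∧ treeHeight hT s = α := by
  haveI := hT t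
  obtain ⟨a, ha⟩ := Ordinal.typein_surj (· < ·) h
  exact ⟨a.1, a.2, by rw [height_eq_typein hT a.2]; exact ha⟩

theorem pred_comparable (hT : IsTreeOrder T) {s s' t : T} (h : s ≤ t) (h' : s' ≤ t) : s ≤ s' ∨ s' ≤ s := by
  rcases eq_or_lt_of_le h with rfl | h
  · exact Or.inr h'
  rcases eq_or_lt_of_le h' with rfl | h'
  · exact Or.inl h.le
  haveI := hT t
  rcases trichotomous_of (· < ·) (⟨s, h⟩ : {x : T // x < t}) ⟨s', h'⟩ with hlt | heq | hlt
  · exact Or.inl (Subtype.mk_lt_mk.1 hlt).le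
  · exact Or.inl (le_of_eq (congrArg Subtype.val heq))
  · exact Or.inr (Subtype.mk_lt_mk.1 hlt).le

theorem le_of_height_le (hT : IsTreeOrder T) {s s' t : T} (h : s ≤ t) (h' : s' ≤ t)
    (hh : treeHeight hT s ≤ treeHeight hT s') : s ≤ s' := by
  rcases pred_comparable hT h h' with h1 | h1
  · exact h1
  · rcases eq_or_lt_of_le h1 with rfl | h1
    · exact le_rfl
    · exact absurd (height_lt hT h1) (not_lt.2 hh)

theorem eq_of_height_eq (hT : IsTreeOrder T) {s s' t : T} (h : s ≤ t) (h' : s' ≤ t)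
    (hh : treeHeight hT s = treeHeight hT s') : s = s' :=
  le_antisymm (le_of_height_le hT h h' hh.le) (le_of_height_le hT h' h hh.ge)

end TreeAux

namespace TreeAux

variable {T : Type u} [PartialOrder T]

/-- The predecessor of `t` at level `α` (equals `t` if `α ≥ height t`). -/
noncomputable def treeProj (hT : IsTreeOrder T) (α : Ordinal.{u}) (t : T) : T :=
  if h : α < treeHeight hT t then (exists_pred hT h).choose else t

theorem treeProj_le (hT : IsTreeOrder T) (α : Ordinal.{u}) (t : T) : treeProj hT α t ≤ t := by
  unfold treeProj
  split
  · exact (exists_pred hT (by assumption)).choose_spec.1.le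
  · exact le_rfl

theorem height_treeProj (hT : IsTreeOrder T) {α : Ordinal.{u}} {t : T}
    (h : α ≤ treeHeight hT t) : treeHeight hT (treeProj hT α t) = α := by
  unfold treeProj
  split
  · exact (exists_pred hT (by assumption)).choose_spec.2
  · exact le_antisymm (le_of_not_gt (by assumption)) h |>.symm ▸ rfl

theorem treeProj_unique (hT : IsTreeOrder T) {α : Ordinal.{u}} {s t : T}
    (h : s ≤ t) (hs : treeHeight hT s = α) : s = treeProj hT α t := by
  have hα : α ≤ treeHeight hT t := hs ▸ height_le hT h
  have h1 := treeProj_le hT α t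
  have h2 := height_treeProj hT hα
  exact le_antisymm (le_of_height_le hT h h1 (by rw [hs, h2]))
    (le_of_height_le hT h1 h (by rw [hs, h2]))

theorem treeProj_mem (hT : IsTreeOrder T) {T' : Set T}
    (hdc : ∀ s t : T, s < t → t ∈ T' → s ∈ T') {t : T} (ht : t ∈ T')
    (α : Ordinal.{u}) : treeProj hT α t ∈ T' := by
  rcases eq_or_lt_of_le (treeProj_le hT α t) with he | hlt
  · rwa [he]
  · exact hdc _ _ hlt ht

theorem treeProj_treeProj (hT : IsTreeOrder T) {α β : Ordinal.{u}} {t : T}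
    (hαβ : α ≤ β) (hβ : β ≤ treeHeight hT t) :
    treeProj hT α (treeProj hT β t) = treeProj hT α t := by
  have h1 : treeProj hT α (treeProj hT β t) ≤ t :=
    le_trans (treeProj_le hT _ _) (treeProj_le hT _ _)
  have h2 : treeHeight hT (treeProj hT α (treeProj hT β t)) = α :=
    height_treeProj hT (by rw [height_treeProj hT hβ]; exact hαβ)
  exact treeProj_unique hT h1 h2

/-- An increasing ordinal sequence closed under `F` with sups at limits. -/
noncomputable def ordSeq (F : Ordinal.{u} → Ordinal.{u}) (i : Ordinal.{u}) : Ordinal.{u} :=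
  Ordinal.limitRecOn i 0 (fun _ prev => F prev) (fun o _ ih => Ordinal.bsup o ih)

theorem ordSeq_zero (F : Ordinal.{u} → Ordinal.{u}) : ordSeq F 0 = 0 :=
  Ordinal.limitRecOn_zero _ _ _

theorem ordSeq_succ (F : Ordinal.{u} → Ordinal.{u}) (i : Ordinal.{u}) :
    ordSeq F (Order.succ i) = F (ordSeq F i) :=
  Ordinal.limitRecOn_succ _ _ _ _

theorem ordSeq_limit (F : Ordinal.{u} → Ordinal.{u}) {i : Ordinal.{u}} (hi : Order.IsSuccLimit i) :
    ordSeq F i = Ordinal.bsup i (fun j _ => ordSeq F j) :=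
  Ordinal.limitRecOn_limit _ _ _ _ hi

theorem ordSeq_strictMono {F : Ordinal.{u} → Ordinal.{u}} (hF : ∀ γ, γ < F γ) :
    StrictMono (ordSeq F) := by
  have key : ∀ j i, i < j → ordSeq F i < ordSeq F j := by
    intro j
    induction j using Ordinal.limitRecOn with
    | zero => intro i hi; exact absurd hi (not_lt_of_ge (zero_le (a := i)))
    | add_one j ih =>
      intro i hi
      rw [Ordinal.add_one_eq_succ] at hi ⊢
      have h1 : ordSeq F i ≤ ordSeq F j := by
        rcases (Order.lt_succ_iff.1 hi).lt_or_eq with h | rfl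
        · exact (ih i h).le
        · exact le_rfl
      rw [ordSeq_succ]
      exact lt_of_le_of_lt h1 (hF _)
    | limit j hj ih =>
      intro i hi
      have h1 : Order.succ i < j := hj.succ_lt hi
      have h2 : ordSeq F i < ordSeq F (Order.succ i) := by
        rw [ordSeq_succ]; exact hF _
      rw [ordSeq_limit F hj]
      exact lt_of_lt_of_le h2 (Ordinal.le_bsup (fun j _ => ordSeq F j) _ h1)
  exact fun i j h => key j i h

theorem ordSeq_bound {F : Ordinal.{u} → Ordinal.{u}} {c : Ordinal.{u}} (hc : Order.IsSuccLimit c)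
    (hF : ∀ γ, γ < c → F γ < c) {e : Ordinal.{u}}
    (he : ∀ i, i ≤ e → i.card < c.cof) :
    ∀ i, i ≤ e → ordSeq F i < c := by
  intro i
  induction i using Ordinal.limitRecOn with
  | zero => intro _; rw [ordSeq_zero]; exact hc.pos
  | add_one i ih =>
    intro hi
    rw [Ordinal.add_one_eq_succ] at hi ⊢
    rw [ordSeq_succ]
    exact hF _ (ih (le_trans (Order.le_succ i) hi))
  | limit i hi ih =>
    intro hie
    rw [ordSeq_limit F hi]
    exact Ordinal.bsup_lt_ord (he i hie) (fun j hj => ih j hj (le_trans hj.le hie))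

end TreeAux

namespace TreeAux

variable {T : Type u} [PartialOrder T]

theorem height_lt_ord {κo : Ordinal.{u}} (hT : IsTreeOrder T)
    (hempty : treeLevel hT κo = ∅) (t : T) : treeHeight hT t < κo := by
  by_contra hcon
  rcases (not_lt.1 hcon).lt_or_eq with h | h
  · obtain ⟨s, _, hs⟩ := exists_pred hT h
    exact Set.eq_empty_iff_forall_notMem.1 hempty s hs
  · exact Set.eq_empty_iff_forall_notMem.1 hempty t h.symm

/-- The subtree of elements of `T'` with extensions in `T'` at all levels `< κo`. -/
def goodSet (hT : IsTreeOrder T) (T' : Set T) (κo : Ordinal.{u}) : Set T :=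
  {t | t ∈ T' ∧ ∀ β, β < κo → treeHeight hT t ≤ β → ∃ s, s ∈ T' ∧ treeHeight hT s = β ∧ t ≤ s}

theorem mem_goodSet {T' : Set T} {κo : Ordinal.{u}} (hT : IsTreeOrder T)
    (hdc : ∀ s t : T, s < t → t ∈ T' → s ∈ T') {t : T} (ht : t ∈ T')
    (hcof : ∀ c, c < κo → ∃ γ, c ≤ γ ∧ γ < κo ∧ ∃ u, u ∈ T' ∧ treeHeight hT u = γ ∧ t ≤ u) :
    t ∈ goodSet hT T' κo := by
  refine ⟨ht, fun β hβ hhtβ => ?_⟩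
  obtain ⟨γ, hβγ, hγκ, u, huT, huht, htu⟩ := hcof β hβ
  have hβht : β ≤ treeHeight hT u := by rw [huht]; exact hβγ
  refine ⟨treeProj hT β u, treeProj_mem hT hdc huT β, height_treeProj hT hβht, ?_⟩
  exact le_of_height_le hT htu (treeProj_le hT β u)
    (by rw [height_treeProj hT hβht]; exact hhtβ)

theorem goodSet_subset {T' : Set T} {κo : Ordinal.{u}} (hT : IsTreeOrder T) :
    goodSet hT T' κo ⊆ T' := fun _ h => h.1

theorem goodSet_dc {T' : Set T} {κo : Ordinal.{u}} (hT : IsTreeOrder T)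
    (hdc : ∀ s t : T, s < t → t ∈ T' → s ∈ T') {s t : T} (hst : s ≤ t)
    (ht : t ∈ goodSet hT T' κo) : s ∈ goodSet hT T' κo := by
  have hsT' : s ∈ T' := by
    rcases eq_or_lt_of_le hst with rfl | h
    · exact ht.1
    · exact hdc _ _ h ht.1
  refine ⟨hsT', fun β hβ hhtβ => ?_⟩
  rcases le_or_gt (treeHeight hT t) β with h | h
  · obtain ⟨w, hw1, hw2, hw3⟩ := ht.2 β hβ h
    exact ⟨w, hw1, hw2, le_trans hst hw3⟩
  · refine ⟨treeProj hT β t, treeProj_mem hT hdc ht.1 β, height_treeProj hT h.le, ?_⟩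
    exact le_of_height_le hT hst (treeProj_le hT β t)
      (by rw [height_treeProj hT h.le]; exact hhtβ)

theorem pigeon {T' : Set T} {κ η : Cardinal.{u}} (hκreg : κ.IsRegular) (hηκ : η < κ)
    (hT : IsTreeOrder T)
    (hsmall : ∀ α < κ.ord, Cardinal.mk ↥(T' ∩ treeLevel hT α) < η)
    {α : Ordinal.{u}} (hα : α < κ.ord) (g : Ordinal.{u} → T)
    (hg : ∀ γ, α ≤ γ → γ < κ.ord → g γ ∈ T' ∩ treeLevel hT α) :
    ∃ s ∈ T' ∩ treeLevel hT α, ∀ c, c < κ.ord → ∃ γ, c ≤ γ ∧ γ < κ.ord ∧ α ≤ γ ∧ g γ = s := by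
  by_contra hcon
  push_neg at hcon
  choose cs hcs1 hcs2 using hcon
  set f : ↥(T' ∩ treeLevel hT α) → Ordinal.{u} := fun s => cs s.1 s.2 with hf
  have hc0 : (⨆ s, f s) < κ.ord := by
    refine Ordinal.iSup_lt_ord (f := f) ?_ (fun i => hcs1 i.1 i.2)
    rw [hκreg.cof_eq]
    exact lt_trans (hsmall α hα) hηκ
  set γ0 : Ordinal.{u} := max α (⨆ s, f s) with hγ0
  have hγ0κ : γ0 < κ.ord := max_lt hα hc0
  have hmem : g γ0 ∈ T' ∩ treeLevel hT α := hg γ0 (le_max_left _ _) hγ0κ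
  have hle : cs (g γ0) hmem ≤ γ0 :=
    le_trans (Ordinal.le_iSup f ⟨g γ0, hmem⟩) (le_max_right _ _)
  exact hcs2 (g γ0) hmem γ0 hle hγ0κ (le_max_left _ _) rfl

theorem goodSet_extend {T' : Set T} {κ η : Cardinal.{u}} (hκreg : κ.IsRegular) (hηκ : η < κ)
    (hT : IsTreeOrder T) (hdc : ∀ s t : T, s < t → t ∈ T' → s ∈ T')
    (hsmall : ∀ α < κ.ord, Cardinal.mk ↥(T' ∩ treeLevel hT α) < η)
    {t : T} (ht : t ∈ goodSet hT T' κ.ord)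
    {β : Ordinal.{u}} (hβ : β < κ.ord) (hhtβ : treeHeight hT t ≤ β) :
    ∃ s, s ∈ goodSet hT T' κ.ord ∧ treeHeight hT s = β ∧ t ≤ s := by
  classical
  set g : Ordinal.{u} → T := fun γ =>
    if h : β ≤ γ ∧ γ < κ.ord then treeProj hT β ((ht.2 γ h.2 (le_trans hhtβ h.1)).choose)
    else t with hgdef
  have hgspec : ∀ γ (h1 : β ≤ γ) (h2 : γ < κ.ord), ∃ u, u ∈ T' ∧ treeHeight hT u = γ ∧
      t ≤ u ∧ g γ = treeProj hT β u := by
    intro γ h1 h2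
    obtain ⟨hu1, hu2, hu3⟩ := (ht.2 γ h2 (le_trans hhtβ h1)).choose_spec
    exact ⟨_, hu1, hu2, hu3, by rw [hgdef]; simp only [dif_pos (And.intro h1 h2)]⟩
  have hg : ∀ γ, β ≤ γ → γ < κ.ord → g γ ∈ T' ∩ treeLevel hT β := by
    intro γ h1 h2
    obtain ⟨u, hu1, hu2, _, hu4⟩ := hgspec γ h1 h2
    rw [hu4]
    exact ⟨treeProj_mem hT hdc hu1 β, height_treeProj hT (by rw [hu2]; exact h1)⟩
  obtain ⟨s, hsA, hfib⟩ := pigeon hκreg hηκ hT hsmall hβ g hg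
  have hsS : s ∈ goodSet hT T' κ.ord := by
    refine mem_goodSet hT hdc hsA.1 (fun c hc => ?_)
    obtain ⟨γ, hγ1, hγ2, hγ3, hγ4⟩ := hfib (max c β) (max_lt hc hβ)
    obtain ⟨u, hu1, hu2, _, hu4⟩ := hgspec γ hγ3 hγ2
    refine ⟨γ, le_trans (le_max_left _ _) hγ1, hγ2, u, hu1, hu2, ?_⟩
    rw [← hγ4, hu4]
    exact treeProj_le hT β u
  have hts : t ≤ s := by
    obtain ⟨γ, hγ1, hγ2, hγ3, hγ4⟩ := hfib β hβ
    obtain ⟨u, hu1, hu2, hu3, hu4⟩ := hgspec γ hγ3 hγ2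
    have hsu : s ≤ u := by rw [← hγ4, hu4]; exact treeProj_le hT β u
    exact le_of_height_le hT hu3 hsu (by rw [hsA.2]; exact hhtβ)
  exact ⟨s, hsS, hsA.2, hts⟩

theorem goodSet_ne {T' : Set T} {κ η : Cardinal.{u}} (hκreg : κ.IsRegular) (hηκ : η < κ)
    (hT : IsTreeOrder T) (hdc : ∀ s t : T, s < t → t ∈ T' → s ∈ T')
    (hne : ∀ α < κ.ord, (T' ∩ treeLevel hT α).Nonempty)
    (hsmall : ∀ α < κ.ord, Cardinal.mk ↥(T' ∩ treeLevel hT α) < η)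
    {α : Ordinal.{u}} (hα : α < κ.ord) :
    ∃ t, t ∈ goodSet hT T' κ.ord ∧ treeHeight hT t = α := by
  classical
  set g : Ordinal.{u} → T := fun γ =>
    if h : α ≤ γ ∧ γ < κ.ord then treeProj hT α (hne γ h.2).some
    else (hne α hα).some with hgdef
  have hgspec : ∀ γ (h1 : α ≤ γ) (h2 : γ < κ.ord), ∃ u, u ∈ T' ∧ treeHeight hT u = γ ∧
      g γ = treeProj hT α u := by
    intro γ h1 h2
    obtain ⟨hu1, hu2⟩ := (hne γ h2).some_mem
    exact ⟨_, hu1, hu2, by rw [hgdef]; simp only [dif_pos (And.intro h1 h2)]⟩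
  have hg : ∀ γ, α ≤ γ → γ < κ.ord → g γ ∈ T' ∩ treeLevel hT α := by
    intro γ h1 h2
    obtain ⟨u, hu1, hu2, hu3⟩ := hgspec γ h1 h2
    rw [hu3]
    exact ⟨treeProj_mem hT hdc hu1 α, height_treeProj hT (by rw [hu2]; exact h1)⟩
  obtain ⟨s, hsA, hfib⟩ := pigeon hκreg hηκ hT hsmall hα g hg
  refine ⟨s, mem_goodSet hT hdc hsA.1 (fun c hc => ?_), hsA.2⟩
  obtain ⟨γ, hγ1, hγ2, hγ3, hγ4⟩ := hfib (max c α) (max_lt hc hα)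
  obtain ⟨u, hu1, hu2, hu3⟩ := hgspec γ hγ3 hγ2
  refine ⟨γ, le_trans (le_max_left _ _) hγ1, hγ2, u, hu1, hu2, ?_⟩
  rw [← hγ4, hu3]
  exact treeProj_le hT α u

end TreeAux

namespace TreeAux

variable {T : Type u} [PartialOrder T]

theorem exists_nobad {T' : Set T} {κ η : Cardinal.{u}} (hκreg : κ.IsRegular)
    (hηreg : η.IsRegular) (hηinf : Cardinal.aleph0 ≤ η) (hηκ : η < κ)
    (hT : IsTreeOrder T) (hdc : ∀ s t : T, s < t → t ∈ T' → s ∈ T')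
    (hne : ∀ α < κ.ord, (T' ∩ treeLevel hT α).Nonempty)
    (hsmall : ∀ α < κ.ord, Cardinal.mk ↥(T' ∩ treeLevel hT α) < η) :
    ∃ γ, γ < κ.ord ∧ ∀ (a b : Ordinal.{u}) (x y : T), γ ≤ a → a ≤ b → b < κ.ord →
      x ∈ goodSet hT T' κ.ord → y ∈ goodSet hT T' κ.ord →
      treeHeight hT x = b → treeHeight hT y = b →
      treeProj hT a x = treeProj hT a y → x = y := by
  classical
  have hκinf : Cardinal.aleph0 ≤ κ := hκreg.aleph0_le
  have κlim : Order.IsSuccLimit κ.ord := Cardinal.isSuccLimit_ord hκinf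
  have ηlim : Order.IsSuccLimit η.ord := Cardinal.isSuccLimit_ord hηinf
  by_contra hcon
  push_neg at hcon
  choose a b x y h1 h2 h3 h4 h5 h6 h7 h8 h9 using hcon
  set F : Ordinal.{u} → Ordinal.{u} :=
    fun γ => if h : γ < κ.ord then b γ h + 1 else γ + 1 with hFdef
  have hF : ∀ γ, γ < F γ := by
    intro γ
    simp only [hFdef]
    split
    · rw [Ordinal.add_one_eq_succ]
      exact Order.lt_succ_iff.2 (le_trans (h1 γ (by assumption)) (h2 γ (by assumption)))
    · rw [Ordinal.add_one_eq_succ]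
      exact Order.lt_succ γ
  have hFκ : ∀ γ, γ < κ.ord → F γ < κ.ord := by
    intro γ hγ
    simp only [hFdef]
    rw [dif_pos hγ, Ordinal.add_one_eq_succ]
    exact κlim.succ_lt (h3 γ hγ)
  have hbd : ∀ i, i ≤ Cardinal.ord η → ordSeq F i < κ.ord := by
    refine ordSeq_bound κlim hFκ (fun i hi => ?_)
    rw [hκreg.cof_eq]
    refine lt_of_le_of_lt ?_ hηκ
    calc i.card ≤ (Cardinal.ord η).card := Ordinal.card_le_card hi
    _ = η := Cardinal.card_ord η
  have smono := ordSeq_strictMono hF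
  set δ : Ordinal.{u} := ordSeq F (Cardinal.ord η) with hδdef
  have hδκ : δ < κ.ord := hbd _ le_rfl
  set A : Set T := goodSet hT T' κ.ord ∩ treeLevel hT δ with hAdef
  have hA : Cardinal.mk ↥A < η :=
    lt_of_le_of_lt (Cardinal.mk_le_mk_of_subset (Set.inter_subset_inter (goodSet_subset hT) (Set.Subset.refl _))) (hsmall δ hδκ)
  set D : ↥A × ↥A → Prop := fun p => ∃ j, j < Cardinal.ord η ∧ ∃ β, β < ordSeq F j ∧
    treeProj hT β p.1.1 ≠ treeProj hT β p.2.1 with hDdef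
  set ι : ↥A × ↥A → Ordinal.{u} := fun p => if h : D p then h.choose else 0 with hιdef
  have hι : ∀ p, ι p < Cardinal.ord η := by
    intro p
    simp only [hιdef]
    split
    · exact (Exists.choose_spec (by assumption : D p)).1
    · exact ηlim.pos
  have hsup : (⨆ p, ι p) < Cardinal.ord η := by
    refine Ordinal.iSup_lt_ord (f := ι) ?_ hι
    rw [hηreg.cof_eq, Cardinal.mk_prod, Cardinal.lift_id]
    exact Cardinal.mul_lt_of_lt hηinf hA hA
  set j0 : Ordinal.{u} := Order.succ (⨆ p, ι p) with hj0def
  have hj0 : j0 < Cardinal.ord η := ηlim.succ_lt hsup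
  have hkey : ∀ p : ↥A × ↥A, ∀ β, β < δ → treeProj hT β p.1.1 ≠ treeProj hT β p.2.1 →
      ∃ β', β' < ordSeq F j0 ∧ treeProj hT β' p.1.1 ≠ treeProj hT β' p.2.1 := by
    intro p β hβ hdiff
    have hD : D p := by
      rw [hδdef, ordSeq_limit F ηlim] at hβ
      obtain ⟨j, hj, hβj⟩ := (Ordinal.lt_bsup _).1 hβ
      exact ⟨j, hj, β, hβj, hdiff⟩
    have hιp : ι p = Exists.choose hD := by
      simp only [hιdef]
      rw [dif_pos hD]
    obtain ⟨β', hβ', hdiff'⟩ := (Exists.choose_spec hD).2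
    refine ⟨β', ?_, hdiff'⟩
    calc β' < ordSeq F (Exists.choose hD) := hβ'
    _ = ordSeq F (ι p) := by rw [hιp]
    _ ≤ ordSeq F (⨆ q, ι q) := smono.monotone (Ordinal.le_iSup ι p)
    _ < ordSeq F j0 := smono (Order.lt_succ _)
  -- the bad pair at level γ1 := ordSeq F j0
  set γ1 : Ordinal.{u} := ordSeq F j0 with hγ1def
  have hγ1κ : γ1 < κ.ord := hbd j0 hj0.le
  have hb1δ : b γ1 hγ1κ < δ := by
    have e1 : ordSeq F (Order.succ j0) = F γ1 := ordSeq_succ F j0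
    have e2 : F γ1 = b γ1 hγ1κ + 1 := by
      simp only [hFdef]
      rw [dif_pos hγ1κ]
    have e3 : ordSeq F (Order.succ j0) ≤ δ := by
      rw [hδdef]
      exact smono.monotone (ηlim.succ_lt hj0).le
    have e4 : b γ1 hγ1κ + 1 ≤ δ := by rw [← e2, ← e1]; exact e3
    refine lt_of_lt_of_le ?_ e4
    rw [Ordinal.add_one_eq_succ]
    exact Order.lt_succ _
  have hxδ : treeHeight hT (x γ1 hγ1κ) ≤ δ := by rw [h6 γ1 hγ1κ]; exact hb1δ.le
  have hyδ : treeHeight hT (y γ1 hγ1κ) ≤ δ := by rw [h7 γ1 hγ1κ]; exact hb1δ.le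
  obtain ⟨x', hx'S, hx'ht, hxx'⟩ :=
    goodSet_extend hκreg hηκ hT hdc hsmall (h4 γ1 hγ1κ) hδκ hxδ
  obtain ⟨y', hy'S, hy'ht, hyy'⟩ :=
    goodSet_extend hκreg hηκ hT hdc hsmall (h5 γ1 hγ1κ) hδκ hyδ
  have hpx : treeProj hT (b γ1 hγ1κ) x' = x γ1 hγ1κ :=
    (treeProj_unique hT hxx' (h6 γ1 hγ1κ)).symm
  have hpy : treeProj hT (b γ1 hγ1κ) y' = y γ1 hγ1κ :=
    (treeProj_unique hT hyy' (h7 γ1 hγ1κ)).symm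
  set p : ↥A × ↥A := (⟨x', ⟨hx'S, hx'ht⟩⟩, ⟨y', ⟨hy'S, hy'ht⟩⟩) with hpdef
  have hdiffb : treeProj hT (b γ1 hγ1κ) p.1.1 ≠ treeProj hT (b γ1 hγ1κ) p.2.1 := by
    show treeProj hT (b γ1 hγ1κ) x' ≠ treeProj hT (b γ1 hγ1κ) y'
    rw [hpx, hpy]
    exact h9 γ1 hγ1κ
  obtain ⟨β', hβ', hdiff'⟩ := hkey p (b γ1 hγ1κ) hb1δ hdiffb
  have ha1b1 : a γ1 hγ1κ ≤ b γ1 hγ1κ := h2 γ1 hγ1κ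
  have hb1x' : b γ1 hγ1κ ≤ treeHeight hT x' := by rw [hx'ht]; exact hb1δ.le
  have hb1y' : b γ1 hγ1κ ≤ treeHeight hT y' := by rw [hy'ht]; exact hb1δ.le
  have ha1x' : a γ1 hγ1κ ≤ treeHeight hT x' := le_trans ha1b1 hb1x'
  have ha1y' : a γ1 hγ1κ ≤ treeHeight hT y' := le_trans ha1b1 hb1y'
  have hagree : treeProj hT (a γ1 hγ1κ) x' = treeProj hT (a γ1 hγ1κ) y' := by
    calc treeProj hT (a γ1 hγ1κ) x'
        = treeProj hT (a γ1 hγ1κ) (treeProj hT (b γ1 hγ1κ) x') :=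
          (treeProj_treeProj hT ha1b1 hb1x').symm
    _ = treeProj hT (a γ1 hγ1κ) (x γ1 hγ1κ) := by rw [hpx]
    _ = treeProj hT (a γ1 hγ1κ) (y γ1 hγ1κ) := h8 γ1 hγ1κ
    _ = treeProj hT (a γ1 hγ1κ) (treeProj hT (b γ1 hγ1κ) y') := by rw [hpy]
    _ = treeProj hT (a γ1 hγ1κ) y' := treeProj_treeProj hT ha1b1 hb1y'
  have hβ'a1 : β' ≤ a γ1 hγ1κ := le_trans hβ'.le (h1 γ1 hγ1κ)
  have : treeProj hT β' p.1.1 = treeProj hT β' p.2.1 := by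
    show treeProj hT β' x' = treeProj hT β' y'
    calc treeProj hT β' x' = treeProj hT β' (treeProj hT (a γ1 hγ1κ) x') :=
          (treeProj_treeProj hT hβ'a1 ha1x').symm
    _ = treeProj hT β' (treeProj hT (a γ1 hγ1κ) y') := by rw [hagree]
    _ = treeProj hT β' y' := treeProj_treeProj hT hβ'a1 ha1y'
  exact hdiff' this

end TreeAux


/-- Combinatorial core of Lemma 2.1: if `κ` is regular uncountable,
`η < κ` is an infinite regular cardinal, `T` is a tree of height `κ`, and
`T' ⊆ T` is downward closed and meets every level `α < κ` in a nonempty set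
of cardinality `< η`, then `T` has a cofinal branch. -/
theorem narrow_subtree_gives_branch {T : Type u} [PartialOrder T]
    (κ η : Cardinal.{u}) (hκreg : κ.IsRegular) (hκunc : Cardinal.aleph0 < κ)
    (hηreg : η.IsRegular) (hηinf : Cardinal.aleph0 ≤ η) (hηκ : η < κ)
    (hT : IsTreeOrder T) (hheight : treeHasHeight hT κ.ord)
    (T' : Set T)
    (hdc : ∀ s t : T, s < t → t ∈ T' → s ∈ T')
    (hne : ∀ α < κ.ord, (T' ∩ treeLevel hT α).Nonempty)
    (hsmall : ∀ α < κ.ord, Cardinal.mk ↥(T' ∩ treeLevel hT α) < η) :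
    ∃ b : Set T, IsCofinalBranch hT κ.ord b := by

  classical
  open TreeAux in
  obtain ⟨hempty, hlevels⟩ := hheight
  have htlt : ∀ t : T, treeHeight hT t < κ.ord := TreeAux.height_lt_ord hT hempty
  obtain ⟨γ0, hγ0, inj⟩ :=
    TreeAux.exists_nobad hκreg hηreg hηinf hηκ hT hdc hne hsmall
  obtain ⟨x0, hx0S, hx0ht⟩ := TreeAux.goodSet_ne hκreg hηκ hT hdc hne hsmall hγ0
  have half : ∀ s s', s ∈ TreeAux.goodSet hT T' κ.ord → s' ∈ TreeAux.goodSet hT T' κ.ord →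
      x0 ≤ s → x0 ≤ s' → treeHeight hT s ≤ treeHeight hT s' → s ≤ s' := by
    intro s s' hs hs' hx0s hx0s' hh
    have huS : TreeAux.treeProj hT (treeHeight hT s) s' ∈ TreeAux.goodSet hT T' κ.ord :=
      TreeAux.goodSet_dc hT hdc (TreeAux.treeProj_le hT _ s') hs'
    have hu_ht : treeHeight hT (TreeAux.treeProj hT (treeHeight hT s) s') = treeHeight hT s :=
      TreeAux.height_treeProj hT hh
    have hγs : γ0 ≤ treeHeight hT s := hx0ht ▸ TreeAux.height_le hT hx0s
    have e1 : TreeAux.treeProj hT γ0 s = x0 := (TreeAux.treeProj_unique hT hx0s hx0ht).symm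
    have e2 : TreeAux.treeProj hT γ0 s' = x0 := (TreeAux.treeProj_unique hT hx0s' hx0ht).symm
    have e3 : TreeAux.treeProj hT γ0 (TreeAux.treeProj hT (treeHeight hT s) s') = x0 := by
      rw [TreeAux.treeProj_treeProj hT hγs hh]
      exact e2
    have heq : s = TreeAux.treeProj hT (treeHeight hT s) s' :=
      inj γ0 (treeHeight hT s) s (TreeAux.treeProj hT (treeHeight hT s) s')
        le_rfl hγs (htlt s) hs huS rfl hu_ht (by rw [e1, e3])
    rw [heq]
    exact TreeAux.treeProj_le hT _ s'
  have comp : ∀ s s', s ∈ TreeAux.goodSet hT T' κ.ord → s' ∈ TreeAux.goodSet hT T' κ.ord →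
      x0 ≤ s → x0 ≤ s' → s ≤ s' ∨ s' ≤ s := by
    intro s s' hs hs' h1 h2
    rcases le_total (treeHeight hT s) (treeHeight hT s') with hh | hh
    · exact Or.inl (half s s' hs hs' h1 h2 hh)
    · exact Or.inr (half s' s hs' hs h2 h1 hh)
  refine ⟨{t | ∃ s, s ∈ TreeAux.goodSet hT T' κ.ord ∧ x0 ≤ s ∧ t ≤ s}, ?_, ?_⟩
  · intro t ht t' ht' _
    obtain ⟨s, hs, hx0s, hts⟩ := ht
    obtain ⟨s', hs', hx0s', hts'⟩ := ht'
    rcases comp s s' hs hs' hx0s hx0s' with h | h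
    · exact TreeAux.pred_comparable hT (le_trans hts h) hts'
    · exact TreeAux.pred_comparable hT hts (le_trans hts' h)
  · intro α hα
    have hβ : max α γ0 < κ.ord := max_lt hα hγ0
    obtain ⟨s, hsS, hsht, hx0s⟩ := TreeAux.goodSet_extend hκreg hηκ hT hdc hsmall hx0S hβ
      (by rw [hx0ht]; exact le_max_right _ _)
    refine ⟨TreeAux.treeProj hT α s, ⟨s, hsS, hx0s, TreeAux.treeProj_le hT α s⟩, ?_⟩
    exact TreeAux.height_treeProj hT (by rw [hsht]; exact le_max_left _ _)
end
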